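/- Subtrajectory Fréchet monotonicity: for a trajectory T and indices a ≤ c ≤ d ≤ b, any discrete walk witnessing D_F(T[a,b], T[x,y]) ≤ Δ induces, for the restriction rows c through d, indices x ≤ x' ≤ y' ≤ y such that D_F(T[c,d], T[x',y']) ≤ Δ. In particular, if T[a,b] is within discrete Fréchet distance Δ of some subtrajectory S, then every subtrajectory T[c,d] of T[a,b] is within discrete Fréchet distance Δ of some subtrajectory of S. -/

import Mathlib

/-- One step of a discrete walk: each coordinate stays or decreases by one. -/
def Step (p q : ℕ × ℕ) : Prop :=
  (q.1 = p.1 ∨ q.1 + 1 = p.1) ∧ (q.2 = p.2 ∨ q.2 + 1 = p.2)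

/-- A discrete walk from `(x, y)` down to `(1, 1)`. -/
def IsWalk (F : List (ℕ × ℕ)) (x y : ℕ) : Prop :=
  F.head? = some (x, y) ∧ F.getLast? = some (1, 1) ∧ List.Chain' Step F

/-- The cost of a discrete walk: maximum pointwise distance along the walk. -/
noncomputable def walkCost (P Q : ℕ → ℝ × ℝ) (F : List (ℕ × ℕ)) : ℝ :=
  (F.map fun p => dist (P p.1) (Q p.2)).foldr max 0

/-- The discrete Fréchet distance between the sequences `P 1, …, P x` and `Q 1, …, Q y`. -/
noncomputable def dF (P : ℕ → ℝ × ℝ) (x : ℕ) (Q : ℕ → ℝ × ℝ) (y : ℕ) : ℝ :=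
  sInf {c | ∃ F, IsWalk F x y ∧ walkCost P Q F = c}

/-- The subtrajectory of `T` starting at index `a`, reindexed from `1`. -/
def subtraj (T : ℕ → ℝ × ℝ) (a : ℕ) : ℕ → ℝ × ℝ := fun i => T (a + i - 1)

open List

lemma foldr_max_nonneg (L : List ℝ) : 0 ≤ L.foldr max 0 := by
  induction L with
  | nil => simp
  | cons a t ih => exact le_trans ih (le_max_right _ _)

lemma foldr_max_le_of_sublist {L M : List ℝ} (h : L <+ M) :
    L.foldr max 0 ≤ M.foldr max 0 := by
  induction h with
  | slnil => exact le_rfl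
  | cons a h ih => exact le_trans ih (le_max_right _ _)
  | cons_cons a h ih => exact max_le_max le_rfl ih

lemma foldr_max_mem (L : List ℝ) : L.foldr max 0 = 0 ∨ L.foldr max 0 ∈ L := by
  induction L with
  | nil => left; rfl
  | cons a t ih =>
    rcases max_choice a (t.foldr max 0) with h | h
    · right; simp only [List.foldr_cons, h]; exact mem_cons_self
    · rcases ih with h0 | hm
      · left; rw [List.foldr_cons, h, h0]
      · right; simp only [List.foldr_cons, h]; exact mem_cons_of_mem _ hm

lemma last_le_of_chain' : ∀ (F : List (ℕ × ℕ)), List.Chain' Step F → ∀ l,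
    F.getLast? = some l → ∀ p ∈ F, l.1 ≤ p.1 ∧ l.2 ≤ p.2 := by
  intro F
  induction F with
  | nil => intro _ l hl; simp at hl
  | cons a t ih =>
    intro hc l hl p hp
    cases t with
    | nil =>
      simp only [List.getLast?_singleton, Option.some.injEq] at hl
      simp only [List.mem_singleton] at hp
      subst hl; subst hp; exact ⟨le_rfl, le_rfl⟩
    | cons b t' =>
      obtain ⟨hstep, hc2⟩ := List.isChain_cons_cons.mp hc
      have hl2 : (b :: t').getLast? = some l := by rwa [List.getLast?_cons_cons] at hl
      rcases List.mem_cons.mp hp with rfl | hp'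
      · have hb := ih hc2 l hl2 b (by simp)
        obtain ⟨h1, h2⟩ := hstep
        constructor
        · rcases h1 with h | h <;> omega
        · rcases h2 with h | h <;> omega
      · exact ih hc2 l hl2 p hp'

lemma le_head_of_chain' : ∀ (F : List (ℕ × ℕ)), List.Chain' Step F → ∀ h,
    F.head? = some h → ∀ p ∈ F, p.1 ≤ h.1 ∧ p.2 ≤ h.2 := by
  intro F
  induction F with
  | nil => intro _ h hh; simp at hh
  | cons a t ih =>
    intro hc h hh p hp
    have ha : a = h := by simpa using hh
    subst ha
    rcases List.mem_cons.mp hp with rfl | hp'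
    · exact ⟨le_rfl, le_rfl⟩
    · cases t with
      | nil => simp at hp'
      | cons b t' =>
        obtain ⟨hstep, hc2⟩ := List.isChain_cons_cons.mp hc
        have hpb := ih hc2 b rfl p hp'
        obtain ⟨h1, h2⟩ := hstep
        constructor
        · rcases h1 with h | h <;> omega
        · rcases h2 with h | h <;> omega

lemma cutTop : ∀ (F : List (ℕ × ℕ)), List.Chain' Step F → ∀ m n, F.head? = some (m, n) →
    F.getLast? = some (1, 1) → ∀ k, 1 ≤ k → k ≤ m →
    ∃ n' G, G.Sublist F ∧ G.head? = some (k, n') ∧ G.getLast? = some (1, 1) ∧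
      List.Chain' Step G ∧ n' ≤ n := by
  intro F
  induction F with
  | nil => intro _ m n hh; simp at hh
  | cons a t ih =>
    intro hc m n hh hl k hk1 hkm
    have ha : a = (m, n) := by simpa using hh
    subst ha
    by_cases hkeq : k = m
    · subst hkeq
      exact ⟨n, (k, n) :: t, List.Sublist.refl _, rfl, hl, hc, le_rfl⟩
    · have hklt : k < m := lt_of_le_of_ne hkm hkeq
      cases t with
      | nil =>
        simp only [List.getLast?_singleton, Option.some.injEq, Prod.mk.injEq] at hl
        omega
      | cons b t' =>
        obtain ⟨hstep, hc2⟩ := List.isChain_cons_cons.mp hc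
        obtain ⟨m₂, n₂⟩ := b
        have hl2 : ((m₂, n₂) :: t').getLast? = some (1, 1) := by
          rwa [List.getLast?_cons_cons] at hl
        have hkm2 : k ≤ m₂ := by rcases hstep.1 with h | h <;> omega
        obtain ⟨n', G, hsub, h1, h2, h3, h4⟩ := ih hc2 m₂ n₂ rfl hl2 k hk1 hkm2
        exact ⟨n', G, hsub.trans (List.sublist_cons_self _ _), h1, h2, h3,
          by rcases hstep.2 with h | h <;> omega⟩

lemma cutBot : ∀ (F : List (ℕ × ℕ)), List.Chain' Step F → ∀ k n', F.head? = some (k, n') →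
    F.getLast? = some (1, 1) → ∀ l, 1 ≤ l → l ≤ k →
    ∃ n'' G, G.Sublist F ∧ G.head? = some (k, n') ∧ G.getLast? = some (l, n'') ∧
      List.Chain' Step G ∧ 1 ≤ n'' ∧ n'' ≤ n' := by
  intro F
  induction F with
  | nil => intro _ k n' hh; simp at hh
  | cons a t ih =>
    intro hc k n' hh hl l hl1 hlk
    have ha : a = (k, n') := by simpa using hh
    subst ha
    cases t with
    | nil =>
      simp only [List.getLast?_singleton, Option.some.injEq, Prod.mk.injEq] at hl
      obtain ⟨hk, hn⟩ := hl
      have hll : l = 1 := by omega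
      refine ⟨1, [(k, n')], List.Sublist.refl _, rfl, ?_, List.isChain_singleton _, le_rfl, by omega⟩
      simp [hk, hn, hll]
    | cons b t' =>
      obtain ⟨hstep, hc2⟩ := List.isChain_cons_cons.mp hc
      obtain ⟨k₂, n₂⟩ := b
      have hl2 : ((k₂, n₂) :: t').getLast? = some (1, 1) := by
        rwa [List.getLast?_cons_cons] at hl
      by_cases hcase : l ≤ k₂
      · obtain ⟨n'', G, hsub, h1, h2, h3, h4, h5⟩ := ih hc2 k₂ n₂ rfl hl2 l hl1 hcase
        cases G with
        | nil => simp at h1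
        | cons g G' =>
          have hg : g = (k₂, n₂) := by simpa using h1
          subst hg
          refine ⟨n'', (k, n') :: (k₂, n₂) :: G', hsub.cons₂ _, rfl, ?_, ?_, h4,
            by rcases hstep.2 with h | h <;> omega⟩
          · rwa [List.getLast?_cons_cons]
          · exact List.isChain_cons_cons.mpr ⟨hstep, h3⟩
      · have hkl : k = l := by rcases hstep.1 with h | h <;> omega
        have hn'1 : 1 ≤ n' := by
          have := last_le_of_chain' _ hc (1, 1) hl (k, n') (by simp)
          exact this.2
        refine ⟨n', [(k, n')], ?_, rfl, by simp [hkl], List.isChain_singleton _, hn'1, le_rfl⟩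
        exact (List.nil_sublist _).cons₂ _

lemma chain'_map_shift (l0 n0 : ℕ) : ∀ (G : List (ℕ × ℕ)), List.Chain' Step G →
    (∀ p ∈ G, l0 ≤ p.1 ∧ n0 ≤ p.2) →
    List.Chain' Step (G.map fun p => (p.1 - l0 + 1, p.2 - n0 + 1)) := by
  intro G
  induction G with
  | nil => simp
  | cons a t ih =>
    intro hc hb
    cases t with
    | nil => simp [List.Chain', List.isChain_singleton]
    | cons b t' =>
      obtain ⟨hstep, hc2⟩ := List.isChain_cons_cons.mp hc
      rw [List.map_cons, List.map_cons]
      refine List.isChain_cons_cons.mpr ⟨?_, ?_⟩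
      · have hbb := hb b (by simp)
        have hba := hb a (by simp)
        obtain ⟨h1, h2⟩ := hstep
        constructor
        · simp only
          rcases h1 with h | h
          · left; omega
          · right; omega
        · simp only
          rcases h2 with h | h
          · left; omega
          · right; omega
      · have := ih hc2 (fun p hp => hb p (List.mem_cons_of_mem _ hp))
        simpa [List.Chain'] using this

def colw : ℕ → List (ℕ × ℕ)
  | 0 => []
  | n + 1 => (1, n + 1) :: colw n

def stairw : ℕ → ℕ → List (ℕ × ℕ)
  | 0, n => colw n
  | 1, n => colw n
  | m + 2, n => (m + 2, n) :: stairw (m + 1) n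

lemma colw_head (n : ℕ) : (colw (n + 1)).head? = some (1, n + 1) := rfl

lemma colw_last : ∀ n, (colw (n + 1)).getLast? = some (1, 1) := by
  intro n
  induction n with
  | zero => rfl
  | succ k ih =>
    show ((1, k + 2) :: colw (k + 1)).getLast? = some (1, 1)
    cases hcw : colw (k + 1) with
    | nil => simp [colw] at hcw
    | cons g G => rw [List.getLast?_cons_cons]; rw [hcw] at ih; exact ih

lemma colw_chain : ∀ n, List.Chain' Step (colw n) := by
  intro n
  induction n with
  | zero => simp [colw, List.Chain']
  | succ k ih =>
    cases k with
    | zero => simp [colw, List.Chain']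
    | succ j =>
      show List.Chain' Step ((1, j + 2) :: (1, j + 1) :: colw j)
      exact List.isChain_cons_cons.mpr ⟨⟨Or.inl rfl, Or.inr rfl⟩, ih⟩

lemma stairw_head : ∀ m n, (stairw (m + 1) (n + 1)).head? = some (m + 1, n + 1) := by
  intro m n
  cases m with
  | zero => rfl
  | succ j => rfl

lemma stairw_last : ∀ m n, (stairw (m + 1) (n + 1)).getLast? = some (1, 1) := by
  intro m
  induction m with
  | zero => intro n; exact colw_last n
  | succ j ih =>
    intro n
    show ((j + 2, n + 1) :: stairw (j + 1) (n + 1)).getLast? = some (1, 1)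
    cases hsw : stairw (j + 1) (n + 1) with
    | nil => have := stairw_head j n; rw [hsw] at this; simp at this
    | cons g G =>
      rw [List.getLast?_cons_cons]
      have := ih n; rw [hsw] at this; exact this

lemma stairw_chain : ∀ m n, List.Chain' Step (stairw (m + 1) (n + 1)) := by
  intro m
  induction m with
  | zero => intro n; exact colw_chain (n + 1)
  | succ j ih =>
    intro n
    show List.Chain' Step ((j + 2, n + 1) :: stairw (j + 1) (n + 1))
    cases hsw : stairw (j + 1) (n + 1) with
    | nil => simp [List.Chain']
    | cons g G =>
      have hg : g = (j + 1, n + 1) := by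
        have := stairw_head j n; rw [hsw] at this; simpa using this
      refine List.isChain_cons_cons.mpr ⟨?_, ?_⟩
      · subst hg; exact ⟨Or.inr rfl, Or.inl rfl⟩
      · have := ih n; rw [hsw] at this; exact this

lemma exists_walk (m n : ℕ) (hm : 1 ≤ m) (hn : 1 ≤ n) : ∃ F, IsWalk F m n := by
  obtain ⟨m', rfl⟩ : ∃ m', m = m' + 1 := ⟨m - 1, by omega⟩
  obtain ⟨n', rfl⟩ : ∃ n', n = n' + 1 := ⟨n - 1, by omega⟩
  exact ⟨stairw (m' + 1) (n' + 1), stairw_head m' n', stairw_last m' n', stairw_chain m' n'⟩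



/-- subtrajectory Fréchet monotonicity: if T[a,b] is within discrete
Fréchet distance Δ of T[x,y], then every subtrajectory T[c,d] of T[a,b] is within
distance Δ of some subtrajectory T[x',y'] of T[x,y]. -/
theorem subtraj_frechet_mono (T : ℕ → ℝ × ℝ) (Δ : ℝ)
    (a b c d x y : ℕ) (ha : 1 ≤ a) (hac : a ≤ c) (hcd : c ≤ d) (hdb : d ≤ b)
    (hx : 1 ≤ x) (hxy : x ≤ y)
    (h : dF (subtraj T a) (b - a + 1) (subtraj T x) (y - x + 1) ≤ Δ) :
    ∃ x' y', x ≤ x' ∧ x' ≤ y' ∧ y' ≤ y ∧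
      dF (subtraj T c) (d - c + 1) (subtraj T x') (y' - x' + 1) ≤ Δ := by
  set P : ℕ → ℝ × ℝ := subtraj T a with hP
  set Q : ℕ → ℝ × ℝ := subtraj T x with hQ
  set p : ℕ := b - a + 1 with hp
  set q : ℕ := y - x + 1 with hq
  set S : Set ℝ := {cst | ∃ F, IsWalk F p q ∧ walkCost P Q F = cst} with hS
  -- S is nonempty
  have hne : S.Nonempty := by
    obtain ⟨F, hF⟩ := exists_walk p q (by omega) (by omega)
    exact ⟨walkCost P Q F, F, hF, rfl⟩
  -- S is finite
  have hfin : S.Finite := by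
    apply Set.Finite.subset
      ((insert (0:ℝ) (((Finset.Icc 1 p ×ˢ Finset.Icc 1 q).image
        fun pr => dist (P pr.1) (Q pr.2)) : Finset ℝ) : Finset ℝ).finite_toSet)
    rintro cst ⟨F, ⟨hh, hl, hc⟩, rfl⟩
    rcases foldr_max_mem (F.map fun pr => dist (P pr.1) (Q pr.2)) with h0 | hm
    · rw [walkCost, h0]; simp
    · rw [List.mem_map] at hm
      obtain ⟨pr, hprF, hpr⟩ := hm
      have hub := le_head_of_chain' F hc (p, q) hh pr hprF
      have hlb := last_le_of_chain' F hc (1, 1) hl pr hprF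
      simp only [Finset.coe_insert, Set.mem_insert_iff, Finset.mem_coe]
      right
      rw [Finset.mem_image]
      refine ⟨pr, ?_, by simpa [walkCost] using hpr⟩
      rw [Finset.mem_product]
      exact ⟨Finset.mem_Icc.mpr ⟨hlb.1, hub.1⟩, Finset.mem_Icc.mpr ⟨hlb.2, hub.2⟩⟩
  have hmem : sInf S ∈ S := hne.csInf_mem hfin
  obtain ⟨F, ⟨hh, hl, hc⟩, hcost⟩ := hmem
  have hcostΔ : walkCost P Q F ≤ Δ := by rw [hcost]; exact h
  -- cut the walk
  set hi : ℕ := d - a + 1 with hhi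
  set lo : ℕ := c - a + 1 with hlo
  obtain ⟨n', G1, hsub1, hG1h, hG1l, hG1c, hn'q⟩ :=
    cutTop F hc p q hh hl hi (by omega) (by omega)
  obtain ⟨n'', G, hsub2, hGh, hGl, hGc, hn''1, hn''n'⟩ :=
    cutBot G1 hG1c hi n' hG1h hG1l lo (by omega) (by omega)
  have hsub : G.Sublist F := hsub2.trans hsub1
  -- bounds on elements of G
  have hbnd : ∀ pr ∈ G, lo ≤ pr.1 ∧ n'' ≤ pr.2 := by
    intro pr hpr
    exact last_le_of_chain' G hGc (lo, n'') hGl pr hpr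
  have hbnd2 : ∀ pr ∈ G, pr.1 ≤ hi ∧ pr.2 ≤ n' := by
    intro pr hpr
    exact le_head_of_chain' G hGc (hi, n') hGh pr hpr
  refine ⟨x + n'' - 1, x + n' - 1, by omega, by omega, by omega, ?_⟩
  set G₂ : List (ℕ × ℕ) := G.map fun pr => (pr.1 - lo + 1, pr.2 - n'' + 1) with hG₂
  have hwalk : IsWalk G₂ (d - c + 1) ((x + n' - 1) - (x + n'' - 1) + 1) := by
    refine ⟨?_, ?_, ?_⟩
    · rw [hG₂, List.head?_map, hGh]
      simp only [Option.map_some, Option.some.injEq, Prod.mk.injEq]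
      constructor <;> omega
    · rw [hG₂, List.getLast?_map, hGl]
      simp only [Option.map_some, Option.some.injEq, Prod.mk.injEq]
      constructor <;> omega
    · exact chain'_map_shift lo n'' G hGc hbnd
  have hcosteq : walkCost (subtraj T c) (subtraj T (x + n'' - 1)) G₂ = walkCost P Q G := by
    rw [walkCost, walkCost, hG₂, List.map_map]
    congr 1
    apply List.map_congr_left
    intro pr hpr
    obtain ⟨h1, h2⟩ := hbnd pr hpr
    simp only [Function.comp_apply]
    have e1 : subtraj T c (pr.1 - lo + 1) = P pr.1 := by
      rw [hP]; unfold subtraj; congr 1; omega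
    have e2 : subtraj T (x + n'' - 1) (pr.2 - n'' + 1) = Q pr.2 := by
      rw [hQ]; unfold subtraj; congr 1; omega
    rw [e1, e2]
  have hle : walkCost P Q G ≤ walkCost P Q F :=
    foldr_max_le_of_sublist (hsub.map _)
  have hbdd : BddBelow {cst | ∃ F', IsWalk F' (d - c + 1) ((x + n' - 1) - (x + n'' - 1) + 1) ∧
      walkCost (subtraj T c) (subtraj T (x + n'' - 1)) F' = cst} := by
    refine ⟨0, ?_⟩
    rintro cst ⟨F', _, rfl⟩
    exact foldr_max_nonneg _
  calc dF (subtraj T c) (d - c + 1) (subtraj T (x + n'' - 1)) ((x + n' - 1) - (x + n'' - 1) + 1)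
      ≤ walkCost (subtraj T c) (subtraj T (x + n'' - 1)) G₂ :=
        csInf_le hbdd ⟨G₂, hwalk, rfl⟩
    _ = walkCost P Q G := hcosteq
    _ ≤ walkCost P Q F := hle
    _ ≤ Δ := hcostΔ
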